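/- A maximal ideal M of C(X) is real (i.e., C(X)/M ≅ ℝ) if and only if M = M_B ∩ C(X), where M_B is the set of Baire one functions arising as pointwise limits of sequences from M. -/

import Mathlib

open Filter Topology

def CFun (X : Type*) [TopologicalSpace X] : Subring (X → ℝ) where
  carrier := {f | Continuous f}
  one_mem' := continuous_const
  zero_mem' := continuous_const
  add_mem' := fun hf hg => hf.add hg
  mul_mem' := fun hf hg => hf.mul hg
  neg_mem' := fun hf => hf.neg

def B1 (X : Type*) [TopologicalSpace X] : Subring (X → ℝ) where
  carrier := {f | ∃ u : ℕ → C(X, ℝ), ∀ x, Tendsto (fun n => u n x) atTop (𝓝 (f x))}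
  one_mem' := ⟨fun _ => 1, fun _ => tendsto_const_nhds⟩
  zero_mem' := ⟨fun _ => 0, fun _ => tendsto_const_nhds⟩
  add_mem' := by
    rintro f g ⟨u, hu⟩ ⟨v, hv⟩
    exact ⟨fun n => u n + v n, fun x => (hu x).add (hv x)⟩
  mul_mem' := by
    rintro f g ⟨u, hu⟩ ⟨v, hv⟩
    exact ⟨fun n => u n * v n, fun x => (hu x).mul (hv x)⟩
  neg_mem' := by
    rintro f ⟨u, hu⟩
    exact ⟨fun n => -u n, fun x => (hu x).neg⟩

theorem CFun_le_B1 (X : Type*) [TopologicalSpace X] : CFun X ≤ B1 X :=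
  fun f hf => ⟨fun _ => ⟨f, hf⟩, fun _ => tendsto_const_nhds⟩

def inclB (X : Type*) [TopologicalSpace X] : CFun X →+* B1 X :=
  Subring.inclusion (CFun_le_B1 X)

def idealB {X : Type*} [TopologicalSpace X] (I : Ideal (CFun X)) : Set (B1 X) :=
  {f | ∃ u : ℕ → CFun X, (∀ n, u n ∈ I) ∧
    ∀ x, Tendsto (fun n => (u n : X → ℝ) x) atTop (𝓝 ((f : X → ℝ) x))}

def IsRealMax {X : Type*} [TopologicalSpace X] (M : Ideal (CFun X)) : Prop :=
  M.IsMaximal ∧ Nonempty ((CFun X ⧸ M) ≃+* ℝ)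

def IsRealMaxB {X : Type*} [TopologicalSpace X] (M : Ideal (B1 X)) : Prop :=
  M.IsMaximal ∧ Nonempty ((B1 X ⧸ M) ≃+* ℝ)

def evalC {X : Type*} [TopologicalSpace X] (p : X) : CFun X →+* ℝ :=
  (Pi.evalRingHom (fun _ => ℝ) p).comp (CFun X).subtype

def evalB {X : Type*} [TopologicalSpace X] (p : X) : B1 X →+* ℝ :=
  (Pi.evalRingHom (fun _ => ℝ) p).comp (B1 X).subtype

def constB1 {X : Type*} [TopologicalSpace X] (r : ℝ) : B1 X :=
  ⟨fun _ => r, ⟨fun _ => ContinuousMap.const X r, fun _ => tendsto_const_nhds⟩⟩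

section RealMaxAux
variable {X : Type*} [TopologicalSpace X]

def constC (r : ℝ) : CFun X := ⟨fun _ => r, continuous_const⟩

lemma contC (f : CFun X) : Continuous (f : X → ℝ) := f.2

@[simp] lemma coe_mulC (a b : CFun X) (x : X) :
    ((a*b : CFun X) : X → ℝ) x = (a : X → ℝ) x * (b : X → ℝ) x := rfl
@[simp] lemma coe_addC (a b : CFun X) (x : X) :
    ((a+b : CFun X) : X → ℝ) x = (a : X → ℝ) x + (b : X → ℝ) x := rfl
@[simp] lemma coe_subC (a b : CFun X) (x : X) :
    ((a-b : CFun X) : X → ℝ) x = (a : X → ℝ) x - (b : X → ℝ) x := rfl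
@[simp] lemma coe_oneC (x : X) : ((1 : CFun X) : X → ℝ) x = 1 := rfl
@[simp] lemma coe_zeroC (x : X) : ((0 : CFun X) : X → ℝ) x = 0 := rfl
@[simp] lemma coe_constC (r : ℝ) (x : X) : ((constC r : CFun X) : X → ℝ) x = r := rfl

def constHom : ℝ →+* CFun X where
  toFun := constC
  map_one' := rfl
  map_mul' := fun _ _ => rfl
  map_zero' := rfl
  map_add' := fun _ _ => rfl

lemma psi_nonneg (ψ : CFun X →+* ℝ) (f : CFun X) (hf : ∀ x, 0 ≤ (f : X → ℝ) x) :
    0 ≤ ψ f := by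
  have hs : Continuous fun x => Real.sqrt ((f : X → ℝ) x) := Real.continuous_sqrt.comp f.2
  have h2 : (⟨_, hs⟩ : CFun X) * ⟨_, hs⟩ = f :=
    Subtype.ext (funext fun x => Real.mul_self_sqrt (hf x))
  rw [← h2, map_mul]; exact mul_self_nonneg _

lemma psi_mono (ψ : CFun X →+* ℝ) (a b : CFun X) (h : ∀ x, (a : X → ℝ) x ≤ (b : X → ℝ) x) :
    ψ a ≤ ψ b := by
  have := psi_nonneg ψ (b - a) (fun x => by simp [sub_nonneg.2 (h x)])
  rw [map_sub] at this; linarith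

def absC (a : CFun X) : CFun X := ⟨fun x => |(a : X → ℝ) x|, a.2.abs⟩
def minC (a b : CFun X) : CFun X := ⟨fun x => min ((a : X → ℝ) x) ((b : X → ℝ) x), a.2.min b.2⟩

@[simp] lemma coe_absC (a : CFun X) (x : X) : ((absC a : CFun X) : X → ℝ) x = |(a : X → ℝ) x| := rfl
@[simp] lemma coe_minC (a b : CFun X) (x : X) :
    ((minC a b : CFun X) : X → ℝ) x = min ((a : X → ℝ) x) ((b : X → ℝ) x) := rfl

lemma psi_abs (ψ : CFun X →+* ℝ) (a : CFun X) : ψ (absC a) = |ψ a| := by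
  have h1 : absC a * absC a = a * a :=
    Subtype.ext (funext fun x => abs_mul_abs_self _)
  have h2 : ψ (absC a) * ψ (absC a) = ψ a * ψ a := by rw [← map_mul, ← map_mul, h1]
  have h3 : 0 ≤ ψ (absC a) := psi_nonneg ψ _ (fun x => abs_nonneg _)
  calc ψ (absC a) = Real.sqrt (ψ (absC a) * ψ (absC a)) := (Real.sqrt_mul_self h3).symm
    _ = Real.sqrt (ψ a * ψ a) := by rw [h2]
    _ = |ψ a| := Real.sqrt_mul_self_eq_abs _

lemma psi_min (ψ : CFun X →+* ℝ) (hconst : ∀ r : ℝ, ψ (constC r) = r) (a b : CFun X) :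
    ψ (minC a b) = min (ψ a) (ψ b) := by
  have key : ∀ p q : ℝ, min p q = (2:ℝ)⁻¹ * (p + q - |p - q|) := by
    intro p q
    rcases le_total p q with h | h
    · rw [min_eq_left h, abs_of_nonpos (by linarith)]; ring
    · rw [min_eq_right h, abs_of_nonneg (by linarith)]; ring
  have h1 : minC a b = constC (2:ℝ)⁻¹ * (a + b - absC (a - b)) :=
    Subtype.ext (funext fun x => by simpa using key ((a : X→ℝ) x) ((b : X→ℝ) x))
  rw [h1, map_mul, hconst, map_sub, map_add, psi_abs, map_sub]
  exact (key (ψ a) (ψ b)).symm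

lemma cip_of_hom (ψ : CFun X →+* ℝ) (hconst : ∀ r : ℝ, ψ (constC r) = r)
    (k : ℕ → CFun X) (hk : ∀ n, ψ (k n) = 0) :
    ∃ x, ∀ n, (k n : X → ℝ) x = 0 := by
  by_contra hcon
  push_neg at hcon
  set t : ℕ → X → ℝ := fun n x => (2:ℝ)⁻¹ ^ n * min (((k n : X → ℝ) x)^2) 1 with ht
  have htc : ∀ n, Continuous (t n) :=
    fun n => continuous_const.mul (((contC (k n)).pow 2).min continuous_const)
  have htnn : ∀ n x, 0 ≤ t n x := fun n x =>
    mul_nonneg (by positivity) (le_min (sq_nonneg _) one_pos.le)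
  have htle : ∀ n x, t n x ≤ (2:ℝ)⁻¹ ^ n := fun n x => by
    have : min (((k n : X → ℝ) x)^2) 1 ≤ 1 := min_le_right _ _
    calc t n x ≤ (2:ℝ)⁻¹ ^ n * 1 := by
          exact mul_le_mul_of_nonneg_left this (by positivity)
      _ = (2:ℝ)⁻¹ ^ n := mul_one _
  have hsum : Summable (fun n => (2:ℝ)⁻¹ ^ n) :=
    summable_geometric_of_lt_one (by norm_num) (by norm_num)
  have hnorm : ∀ n x, ‖t n x‖ ≤ (2:ℝ)⁻¹ ^ n := fun n x => by
    rw [Real.norm_eq_abs, abs_of_nonneg (htnn n x)]; exact htle n x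
  have hhc : Continuous (fun x => ∑' n, t n x) := continuous_tsum htc hsum hnorm
  have hsx : ∀ x, Summable (fun n => t n x) := fun x =>
    Summable.of_nonneg_of_le (htnn · x) (htle · x) hsum
  have hpos : ∀ x, 0 < ∑' n, t n x := by
    intro x
    obtain ⟨n, hn⟩ := hcon x
    refine Summable.tsum_pos (hsx x) (htnn · x) n ?_
    exact mul_pos (by positivity) (lt_min (by positivity) one_pos)
  set H : CFun X := ⟨fun x => ∑' n, t n x, hhc⟩ with hH
  have hHne : ψ H ≠ 0 := by
    intro h0
    have hone : H * ⟨fun x => (∑' n, t n x)⁻¹, hhc.inv₀ (fun x => (hpos x).ne')⟩ = 1 :=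
      Subtype.ext (funext fun x => mul_inv_cancel₀ (hpos x).ne')
    have := congrArg ψ hone
    rw [map_mul, h0, zero_mul, map_one] at this
    exact zero_ne_one this
  have hHnn : 0 ≤ ψ H := psi_nonneg ψ H (fun x => le_of_lt (hpos x))
  have hub : ∀ N : ℕ, ψ H ≤ 2 * (2:ℝ)⁻¹ ^ N := by
    intro N
    set m : ℕ → CFun X := fun n => ⟨fun x => min (((k n : X → ℝ) x)^2) 1,
      (show Continuous fun x => min (((k n : X → ℝ) x)^2) (1:ℝ) from
        ((contC (k n)).pow 2).min continuous_const)⟩ with hm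
    set HN : CFun X := ∑ n ∈ Finset.range N, constC ((2:ℝ)⁻¹ ^ n) * m n with hHN
    have hmn0 : ∀ n, ψ (m n) = 0 := by
      intro n
      have h1 : 0 ≤ ψ (m n) := psi_nonneg ψ _ (fun x => le_min (sq_nonneg _) one_pos.le)
      have h2 : ψ (m n) ≤ ψ (k n * k n) := psi_mono ψ _ _ (fun x => by
        simp only [coe_mulC]
        calc ((m n : CFun X) : X → ℝ) x ≤ ((k n : X → ℝ) x)^2 := min_le_left _ _
          _ = (k n : X → ℝ) x * (k n : X → ℝ) x := sq ((k n : X→ℝ) x))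
      rw [map_mul, hk n, mul_zero] at h2
      linarith
    have hHN0 : ψ HN = 0 := by
      rw [hHN, map_sum]
      refine Finset.sum_eq_zero (fun n _ => ?_)
      rw [map_mul, hmn0 n, mul_zero]
    have hval : ∀ x, (HN : X → ℝ) x = ∑ n ∈ Finset.range N, t n x := by
      intro x
      have := map_sum ((Pi.evalRingHom (fun _ : X => ℝ) x).comp (CFun X).subtype)
        (fun n => constC ((2:ℝ)⁻¹ ^ n) * m n) (Finset.range N)
      exact this
    have hdiff : ∀ x, (H : X → ℝ) x - (HN : X → ℝ) x ≤ 2 * (2:ℝ)⁻¹ ^ N := by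
      intro x
      rw [hval x]
      have hsplit := Summable.sum_add_tsum_nat_add N (hsx x)
      have hshift : Summable (fun n => t (n + N) x) := (summable_nat_add_iff N).2 (hsx x)
      have hgeo : Summable (fun n : ℕ => (2:ℝ)⁻¹ ^ (n + N)) := (summable_nat_add_iff N).2 hsum
      have htail : (∑' n, t (n + N) x) ≤ ∑' n : ℕ, (2:ℝ)⁻¹ ^ (n + N) :=
        Summable.tsum_le_tsum (fun n => htle (n + N) x) hshift hgeo
      have hgeoval : (∑' n : ℕ, (2:ℝ)⁻¹ ^ (n + N)) = 2 * (2:ℝ)⁻¹ ^ N := by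
        have hpa : ∀ n : ℕ, (2:ℝ)⁻¹ ^ (n + N) = (2:ℝ)⁻¹ ^ n * (2:ℝ)⁻¹ ^ N := fun n => pow_add _ _ _
        rw [tsum_congr hpa, tsum_mul_right, tsum_geometric_of_lt_one (by norm_num) (by norm_num)]
        norm_num
      have hHx : (H : X → ℝ) x = (∑ n ∈ Finset.range N, t n x) + ∑' n, t (n + N) x := by
        exact hsplit.symm
      rw [hHx]
      rw [hgeoval] at htail
      linarith
    have hfin := psi_mono ψ (H - HN) (constC (2 * (2:ℝ)⁻¹ ^ N)) (fun x => by
      rw [coe_subC, coe_constC]; exact hdiff x)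
    rw [map_sub, hHN0, sub_zero, hconst] at hfin
    exact hfin
  have hle : ψ H ≤ 0 := by
    by_contra hgt
    push_neg at hgt
    obtain ⟨N, hN⟩ := exists_pow_lt_of_lt_one (by linarith : (0:ℝ) < ψ H / 2)
      (by norm_num : (2:ℝ)⁻¹ < 1)
    have := hub N
    linarith
  exact hHne (le_antisymm hle hHnn)

end RealMaxAux

set_option maxHeartbeats 1000000 in
theorem real_maximal_iff_contraction {X : Type*} [TopologicalSpace X]
    (M : Ideal (CFun X)) (hM : M.IsMaximal) :
    Nonempty ((CFun X ⧸ M) ≃+* ℝ) ↔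
      ∀ g : CFun X, g ∈ M ↔ inclB X g ∈ idealB M := by
  have hone : (1 : CFun X) ∉ M := fun h => hM.ne_top ((Ideal.eq_top_iff_one M).2 h)
  have hunit : ∀ f : CFun X, (∀ x, (f : X → ℝ) x ≠ 0) → f ∉ M := by
    intro f hf hfM
    apply hone
    have hinv : f * ⟨fun x => ((f : X → ℝ) x)⁻¹, (contC f).inv₀ hf⟩ = 1 :=
      Subtype.ext (funext fun x => mul_inv_cancel₀ (hf x))
    rw [← hinv]; exact M.mul_mem_right _ hfM
  constructor
  · rintro ⟨e⟩ g
    set ψ : CFun X →+* ℝ := e.toRingHom.comp (Ideal.Quotient.mk M) with hψ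
    have hker : ∀ f : CFun X, ψ f = 0 ↔ f ∈ M := by
      intro f
      rw [hψ]
      simp only [RingHom.comp_apply, RingEquiv.toRingHom_eq_coe, RingHom.coe_coe]
      constructor
      · intro h
        have h2 : Ideal.Quotient.mk M f = 0 := by
          apply e.injective; rw [map_zero]; exact h
        exact Ideal.Quotient.eq_zero_iff_mem.1 h2
      · intro h
        rw [Ideal.Quotient.eq_zero_iff_mem.2 h, map_zero]
    have hconst : ∀ r : ℝ, ψ (constC r) = r := by
      intro r
      have heq : ψ.comp constHom = RingHom.id ℝ := Subsingleton.elim _ _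
      have h2 := congrArg (fun (h : ℝ →+* ℝ) => h r) heq
      exact h2
    constructor
    · intro hg
      exact ⟨fun _ => g, fun _ => hg, fun x => tendsto_const_nhds⟩
    · rintro ⟨u, huM, hu⟩
      rw [← hker]
      by_contra hne
      set c := |ψ g| with hc
      have hcpos : 0 < c := abs_pos.2 hne
      set s : ℕ → CFun X := fun n => minC (absC (g - u n)) (constC (c/2)) - constC (c/2) with hs
      have hs0 : ∀ n, ψ (s n) = 0 := by
        intro n
        rw [hs]
        simp only
        rw [map_sub, psi_min ψ hconst, psi_abs, hconst, map_sub,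
          (hker (u n)).2 (huM n), sub_zero, ← hc, min_eq_right (by linarith), sub_self]
      obtain ⟨x, hx⟩ := cip_of_hom ψ hconst s hs0
      have hconv : Tendsto (fun n => (u n : X → ℝ) x) atTop (𝓝 ((g : X → ℝ) x)) := hu x
      obtain ⟨N, hN⟩ := Metric.tendsto_atTop.1 hconv (c/2) (by linarith)
      have hd : |(g : X → ℝ) x - (u N : X → ℝ) x| < c/2 := by
        have := hN N (le_refl N)
        rw [Real.dist_eq, abs_sub_comm] at this
        exact this
      have hxN := hx N
      rw [hs] at hxN
      simp only [coe_subC, coe_minC, coe_absC, coe_constC] at hxN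
      have : c/2 ≤ |(g : X → ℝ) x - (u N : X → ℝ) x| := by
        have hmle : min |(g : X → ℝ) x - (u N : X → ℝ) x| (c/2)
            ≤ |(g : X → ℝ) x - (u N : X → ℝ) x| := min_le_left _ _
        linarith [hxN, hmle]
      linarith
  · intro hcond
    have hprime := hM.isPrime
    -- countable intersection property
    have cip : ∀ k : ℕ → CFun X, (∀ n, k n ∈ M) → ∃ x, ∀ n, (k n : X → ℝ) x = 0 := by
      intro k hk
      by_contra hcon
      push_neg at hcon
      set g : ℕ → CFun X := fun m => ∑ j ∈ Finset.range (m+1), k j * k j with hg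
      have hgM : ∀ m, g m ∈ M := fun m => Ideal.sum_mem M (fun j _ => M.mul_mem_left _ (hk j))
      have hgval : ∀ m x, (g m : X → ℝ) x = ∑ j ∈ Finset.range (m+1), ((k j : X → ℝ) x)^2 := by
        intro m x
        have h1 := map_sum ((Pi.evalRingHom (fun _ : X => ℝ) x).comp (CFun X).subtype)
          (fun j => k j * k j) (Finset.range (m+1))
        refine h1.trans ?_
        exact Finset.sum_congr rfl (fun j _ => (sq ((k j : X → ℝ) x)).symm)
      have hgnn : ∀ m x, (0:ℝ) ≤ (g m : X → ℝ) x := fun m x => by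
        rw [hgval]; exact Finset.sum_nonneg fun j _ => sq_nonneg _
      have hden : ∀ m : ℕ, ∀ x : X, (0:ℝ) < 1 + (m:ℝ) * (g m : X → ℝ) x := by
        intro m x
        have h1 : (0:ℝ) ≤ (m:ℝ) * (g m : X → ℝ) x :=
          mul_nonneg (Nat.cast_nonneg m) (hgnn m x)
        linarith
      set u : ℕ → CFun X := fun m =>
        (⟨fun x => (m:ℝ) / (1 + (m:ℝ) * (g m : X → ℝ) x),
          continuous_const.div (continuous_const.add (continuous_const.mul (contC (g m))))
            (fun x => (hden m x).ne')⟩ : CFun X) * g m with hu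
      have huM : ∀ m, u m ∈ M := fun m => M.mul_mem_left _ (hgM m)
      have hlim : ∀ x, Tendsto (fun m => (u m : X → ℝ) x) atTop (𝓝 1) := by
        intro x
        obtain ⟨N, hN⟩ := hcon x
        set c := ((k N : X → ℝ) x)^2 with hcdef
        have hcpos : 0 < c := by positivity
        have hupper : ∀ m : ℕ, (u m : X → ℝ) x ≤ 1 := by
          intro m
          have hdg := hden m x
          have huval : (u m : X → ℝ) x
              = (m:ℝ) * (g m : X → ℝ) x / (1 + (m:ℝ) * (g m : X → ℝ) x) := by
            rw [hu]; simp only [coe_mulC]; ring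
          rw [huval, div_le_one hdg]
          linarith
        have hlow : ∀ m : ℕ, N ≤ m → 1 - (1 + (m:ℝ) * c)⁻¹ ≤ (u m : X → ℝ) x := by
          intro m hm
          have hcg : c ≤ (g m : X → ℝ) x := by
            rw [hgval]
            exact Finset.single_le_sum (fun j _ => sq_nonneg ((k j : X → ℝ) x))
              (Finset.mem_range.2 (Nat.lt_succ_of_le hm))
          have hmnn : (0:ℝ) ≤ (m:ℝ) := Nat.cast_nonneg m
          have hdc : (0:ℝ) < 1 + (m:ℝ) * c := by nlinarith
          have hdg := hden m x
          have huval : (u m : X → ℝ) x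
              = (m:ℝ) * (g m : X → ℝ) x / (1 + (m:ℝ) * (g m : X → ℝ) x) := by
            rw [hu]; simp only [coe_mulC]; ring
          have hrw : 1 - (1 + (m:ℝ) * c)⁻¹ = (m:ℝ) * c / (1 + (m:ℝ) * c) := by
            field_simp
            ring
          rw [huval, hrw, div_le_div_iff₀ hdc hdg]
          nlinarith
        have hlowlim : Tendsto (fun m : ℕ => 1 - (1 + (m:ℝ) * c)⁻¹) atTop (𝓝 1) := by
          have h1 : Tendsto (fun m : ℕ => 1 + (m:ℝ) * c) atTop atTop :=
            tendsto_atTop_add_const_left _ 1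
              (Tendsto.atTop_mul_const hcpos tendsto_natCast_atTop_atTop)
          have h2 : Tendsto (fun m : ℕ => (1 + (m:ℝ) * c)⁻¹) atTop (𝓝 0) :=
            h1.inv_tendsto_atTop
          have h3 : Tendsto (fun m : ℕ => 1 - (1 + (m:ℝ) * c)⁻¹) atTop (𝓝 (1 - 0)) :=
            Tendsto.sub tendsto_const_nhds h2
          simpa using h3
        refine tendsto_of_tendsto_of_tendsto_of_le_of_le' hlowlim tendsto_const_nhds
          ?_ ?_
        · filter_upwards [eventually_ge_atTop N] with m hm
          exact hlow m hm
        · filter_upwards with m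
          exact hupper m
      have h1M : (1 : CFun X) ∈ M := by
        refine (hcond 1).2 ⟨u, huM, fun x => ?_⟩
        exact hlim x
      exact hone h1M
    -- existence of a real value mod M for every f
    have key : ∀ f : CFun X, ∃ r : ℝ, f - constC r ∈ M := by
      intro f
      set dp : ℝ → CFun X := fun r => ⟨fun x => max ((f : X → ℝ) x - r) 0,
        ((contC f).sub continuous_const).max continuous_const⟩ with hdp
      set dm : ℝ → CFun X := fun r => ⟨fun x => max (r - (f : X → ℝ) x) 0,
        (continuous_const.sub (contC f)).max continuous_const⟩ with hdm
      have hdpval : ∀ r x, (dp r : X → ℝ) x = max ((f : X → ℝ) x - r) 0 := fun r x => rfl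
      have hdmval : ∀ r x, (dm r : X → ℝ) x = max (r - (f : X → ℝ) x) 0 := fun r x => rfl
      have hST : ∀ r s : ℝ, r < s → dm r ∈ M ∨ dp s ∈ M := by
        intro r s hrs
        have hzero : dm r * dp s = 0 := by
          apply Subtype.ext; funext x
          show max (r - (f : X → ℝ) x) 0 * max ((f : X → ℝ) x - s) 0 = 0
          rcases le_total ((f : X → ℝ) x) s with h | h
          · rw [max_eq_right (by linarith : (f : X → ℝ) x - s ≤ 0), mul_zero]
          · rw [max_eq_right (by linarith : r - (f : X → ℝ) x ≤ 0), zero_mul]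
        have hmem : dm r * dp s ∈ M := by rw [hzero]; exact M.zero_mem
        exact hprime.mem_or_mem hmem
      have hSne : ∃ s₀ : ℝ, dp s₀ ∈ M := by
        by_contra hca
        push_neg at hca
        have hch : ∀ n : ℕ, ∃ h i : CFun X, i ∈ M ∧ h * dp n + i = 1 := by
          intro n
          obtain ⟨h, i, hi, heq⟩ := hM.exists_inv (hca n)
          exact ⟨h, i, hi, heq⟩
        choose h i hiM heq using hch
        obtain ⟨x, hx⟩ := cip i hiM
        have hgt : ∀ n : ℕ, (n : ℝ) < (f : X → ℝ) x := by
          intro n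
          by_contra hle
          push_neg at hle
          have h1 := congrArg (fun (w : CFun X) => (w : X → ℝ) x) (heq n)
          simp only [coe_addC, coe_mulC, coe_oneC] at h1
          rw [hx n, hdpval, max_eq_right (by linarith : (f : X → ℝ) x - n ≤ 0)] at h1
          norm_num at h1
        obtain ⟨n, hn⟩ := exists_nat_gt ((f : X → ℝ) x)
        exact absurd (hgt n) (by linarith)
      have hTne : ∃ t₀ : ℝ, dm t₀ ∈ M := by
        by_contra hca
        push_neg at hca
        have hch : ∀ n : ℕ, ∃ h i : CFun X, i ∈ M ∧ h * dm (-(n:ℝ)) + i = 1 := by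
          intro n
          obtain ⟨h, i, hi, heq⟩ := hM.exists_inv (hca (-(n:ℝ)))
          exact ⟨h, i, hi, heq⟩
        choose h i hiM heq using hch
        obtain ⟨x, hx⟩ := cip i hiM
        have hgt : ∀ n : ℕ, (f : X → ℝ) x < -(n : ℝ) := by
          intro n
          by_contra hle
          push_neg at hle
          have h1 := congrArg (fun (w : CFun X) => (w : X → ℝ) x) (heq n)
          simp only [coe_addC, coe_mulC, coe_oneC] at h1
          rw [hx n, hdmval, max_eq_right (by linarith : -(n:ℝ) - (f : X → ℝ) x ≤ 0)] at h1
          norm_num at h1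
        obtain ⟨n, hn⟩ := exists_nat_gt (-((f : X → ℝ) x))
        have := hgt n
        linarith
      have hTS : ∀ s : ℝ, dp s ∈ M → ∀ t : ℝ, dm t ∈ M → t ≤ s := by
        intro s hs t ht
        by_contra hlt
        push_neg at hlt
        have hmem : dp s + dm t ∈ M := M.add_mem hs ht
        refine hunit _ (fun x => ?_) hmem
        rw [coe_addC, hdpval, hdmval]
        have h1 : (f : X → ℝ) x - s ≤ max ((f : X → ℝ) x - s) 0 := le_max_left _ _
        have h2 : t - (f : X → ℝ) x ≤ max (t - (f : X → ℝ) x) 0 := le_max_left _ _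
        have h3 : (0:ℝ) ≤ max ((f : X → ℝ) x - s) 0 := le_max_right _ _
        have h4 : (0:ℝ) ≤ max (t - (f : X → ℝ) x) 0 := le_max_right _ _
        have : 0 < max ((f : X → ℝ) x - s) 0 + max (t - (f : X → ℝ) x) 0 := by linarith
        exact this.ne'
      by_cases hexact : ∃ r : ℝ, dp r ∈ M ∧ dm r ∈ M
      · obtain ⟨r, hrp, hrm⟩ := hexact
        have habs : dp r + dm r = absC (f - constC r) := by
          apply Subtype.ext; funext x
          show max ((f : X → ℝ) x - r) 0 + max (r - (f : X → ℝ) x) 0 = |(f : X → ℝ) x - r|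
          rcases le_total ((f : X → ℝ) x) r with h | h
          · rw [max_eq_right (by linarith : (f : X → ℝ) x - r ≤ 0),
              max_eq_left (by linarith : (0:ℝ) ≤ r - (f : X → ℝ) x),
              abs_of_nonpos (by linarith : (f : X → ℝ) x - r ≤ 0)]
            ring
          · rw [max_eq_left (by linarith : (0:ℝ) ≤ (f : X → ℝ) x - r),
              max_eq_right (by linarith : r - (f : X → ℝ) x ≤ 0),
              abs_of_nonneg (by linarith : (0:ℝ) ≤ (f : X → ℝ) x - r)]
            ring
        have hsq : (f - constC r) * (f - constC r) ∈ M := by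
          have h1 : absC (f - constC r) ∈ M := habs ▸ M.add_mem hrp hrm
          have h2 : (f - constC r) * (f - constC r)
              = absC (f - constC r) * absC (f - constC r) :=
            Subtype.ext (funext fun x => (abs_mul_abs_self _).symm)
          rw [h2]
          exact M.mul_mem_left _ h1
        exact ⟨r, (hprime.mem_or_mem hsq).elim id id⟩
      · push_neg at hexact
        obtain ⟨s₀, hs₀⟩ := hSne
        obtain ⟨t₀, ht₀⟩ := hTne
        have hbdd : BddAbove {t : ℝ | dm t ∈ M} := ⟨s₀, fun t ht => hTS s₀ hs₀ t ht⟩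
        set r₀ : ℝ := sSup {t : ℝ | dm t ∈ M} with hr₀
        have hup : ∀ s : ℝ, r₀ < s → dp s ∈ M := by
          intro s hs
          have hmid : dm ((r₀ + s)/2) ∉ M := by
            intro hmem
            have := le_csSup hbdd hmem
            rw [← hr₀] at this
            linarith
          rcases hST ((r₀ + s)/2) s (by linarith) with h | h
          · exact absurd h hmid
          · exact h
        have hdown : ∀ s : ℝ, s < r₀ → dm s ∈ M := by
          intro s hs
          obtain ⟨t, htT, hst⟩ := exists_lt_of_lt_csSup ⟨t₀, ht₀⟩ (hr₀ ▸ hs)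
          rcases hST s t hst with h | h
          · exact h
          · exact absurd htT (hexact t h)
        refine ⟨r₀, ?_⟩
        by_contra hnot
        obtain ⟨h, i, hiM, heq⟩ := hM.exists_inv hnot
        have hfrac : ∀ n : ℕ, (0:ℝ) < 1/(n+1) := fun n => by positivity
        set K : ℕ → CFun X := fun n =>
          i * i + dp (r₀ + 1/(n+1)) * dp (r₀ + 1/(n+1))
            + dm (r₀ - 1/(n+1)) * dm (r₀ - 1/(n+1)) with hK
        have hKM : ∀ n, K n ∈ M := fun n =>
          M.add_mem (M.add_mem (M.mul_mem_left _ hiM)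
            (M.mul_mem_left _ (hup _ (by linarith [hfrac n]))))
            (M.mul_mem_left _ (hdown _ (by linarith [hfrac n])))
        obtain ⟨x, hx⟩ := cip K hKM
        have hterm : ∀ n : ℕ, (i : X → ℝ) x = 0 ∧ (dp (r₀ + 1/(n+1)) : X → ℝ) x = 0
            ∧ (dm (r₀ - 1/(n+1)) : X → ℝ) x = 0 := by
          intro n
          have h0 := hx n
          rw [hK] at h0
          simp only [coe_addC, coe_mulC] at h0
          have e1 := mul_self_nonneg ((i : X → ℝ) x)
          have e2 := mul_self_nonneg ((dp (r₀ + 1/(n+1)) : X → ℝ) x)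
          have e3 := mul_self_nonneg ((dm (r₀ - 1/(n+1)) : X → ℝ) x)
          refine ⟨?_, ?_, ?_⟩ <;> nlinarith
        have hfx : (f : X → ℝ) x = r₀ := by
          have hle : (f : X → ℝ) x ≤ r₀ := by
            by_contra hgt
            push_neg at hgt
            obtain ⟨n, hn⟩ := exists_nat_one_div_lt (by linarith : 0 < (f : X → ℝ) x - r₀)
            have h2 := (hterm n).2.1
            rw [hdpval] at h2
            have hpos : 0 < (f : X → ℝ) x - (r₀ + 1/(n+1)) := by
              have : (1:ℝ)/(n+1) < (f : X → ℝ) x - r₀ := by exact_mod_cast hn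
              linarith
            rw [max_eq_left hpos.le] at h2
            linarith
          have hge : r₀ ≤ (f : X → ℝ) x := by
            by_contra hgt
            push_neg at hgt
            obtain ⟨n, hn⟩ := exists_nat_one_div_lt (by linarith : 0 < r₀ - (f : X → ℝ) x)
            have h2 := (hterm n).2.2
            rw [hdmval] at h2
            have hpos : 0 < (r₀ - 1/(n+1)) - (f : X → ℝ) x := by
              have : (1:ℝ)/(n+1) < r₀ - (f : X → ℝ) x := by exact_mod_cast hn
              linarith
            rw [max_eq_left hpos.le] at h2
            linarith
          linarith
        have h1 := congrArg (fun (w : CFun X) => (w : X → ℝ) x) heq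
        simp only [coe_addC, coe_mulC, coe_subC, coe_constC, coe_oneC] at h1
        rw [hfx, sub_self, mul_zero, (hterm 0).1] at h1
        norm_num at h1
    -- uniqueness and construction of the homomorphism
    have hconst_mem : ∀ r : ℝ, constC r ∈ M → r = 0 := by
      intro r hr
      by_contra h0
      exact hunit (constC r) (fun x => h0) hr
    set ρ : CFun X → ℝ := fun f => Classical.choose (key f) with hρdef
    have hρ : ∀ f : CFun X, f - constC (ρ f) ∈ M := fun f => Classical.choose_spec (key f)
    have uniqA : ∀ (f : CFun X) (r : ℝ), f - constC r ∈ M → ρ f = r := by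
      intro f r hr
      have hsub : (f - constC (ρ f)) - (f - constC r) ∈ M := M.sub_mem (hρ f) hr
      have hrw : (f - constC (ρ f)) - (f - constC r) = constC (r - ρ f) := by
        apply Subtype.ext; funext x
        simp only [coe_subC, coe_constC]
        ring
      rw [hrw] at hsub
      have := hconst_mem _ hsub
      linarith
    set φ : CFun X →+* ℝ :=
      { toFun := ρ
        map_one' := uniqA 1 1 (by
          have : (1 : CFun X) - constC 1 = 0 := Subtype.ext (funext fun x => by
            simp)
          rw [this]; exact M.zero_mem)
        map_zero' := uniqA 0 0 (by
          have : (0 : CFun X) - constC 0 = 0 := Subtype.ext (funext fun x => by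
            simp)
          rw [this]; exact M.zero_mem)
        map_mul' := by
          intro a b
          refine uniqA (a * b) (ρ a * ρ b) ?_
          have hrw : a * b - constC (ρ a * ρ b)
              = a * (b - constC (ρ b)) + constC (ρ b) * (a - constC (ρ a)) := by
            apply Subtype.ext; funext x
            simp only [coe_subC, coe_addC, coe_mulC, coe_constC]
            ring
          rw [hrw]
          exact M.add_mem (M.mul_mem_left _ (hρ b)) (M.mul_mem_left _ (hρ a))
        map_add' := by
          intro a b
          refine uniqA (a + b) (ρ a + ρ b) ?_
          have hrw : a + b - constC (ρ a + ρ b)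
              = (a - constC (ρ a)) + (b - constC (ρ b)) := by
            apply Subtype.ext; funext x
            simp only [coe_subC, coe_addC, coe_constC]
            ring
          rw [hrw]
          exact M.add_mem (hρ a) (hρ b) } with hφ
    have hsurj : Function.Surjective φ := by
      intro r
      refine ⟨constC r, uniqA _ _ ?_⟩
      rw [sub_self]
      exact M.zero_mem
    have hkerM : M = RingHom.ker φ := by
      ext f
      rw [RingHom.mem_ker]
      constructor
      · intro hf
        refine uniqA f 0 ?_
        have : constC (0:ℝ) = (0 : CFun X) := Subtype.ext rfl
        rw [this, sub_zero]
        exact hf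
      · intro hf
        have h2 := hρ f
        have h3 : ρ f = φ f := rfl
        rw [h3, hf] at h2
        have : constC (0:ℝ) = (0 : CFun X) := Subtype.ext rfl
        rw [this, sub_zero] at h2
        exact h2
    exact ⟨(Ideal.quotEquivOfEq hkerM).trans (RingHom.quotientKerEquivOfSurjective hsurj)⟩
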